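/- Mean value inequality for relatively Lipschitzian functions. Let a, b ∈ X with a ≠ b, let f : X → ℝ̄ be finite on the segment [a, b] and locally Lipschitz relative to [a, b] around every point x ∈ [a, b]. Then there exist c ∈ [a, b) and x* ∈ ∂_{[a,b]} f(c) such that ⟨x*, b − a⟩ ≥ f(b) − f(a). -/

import Mathlib

open Filter Topology Set

noncomputable section

/-- A normed space is locally uniformly convex. -/
def LocUnifConvex (E : Type*) [NormedAddCommGroup E] : Prop :=
  ∀ x : E, ‖x‖ = 1 → ∀ ε : ℝ, 0 < ε →
    ∃ δ : ℝ, 0 < δ ∧ ∀ y : E, ‖y‖ = 1 → 2 - δ < ‖x + y‖ → ‖x - y‖ < ε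

/-- Standing assumptions of the paper: `X` is reflexive, both `X` and its dual `X*` are
locally uniformly convex, and the norm of `X` is Fréchet differentiable at every
nonzero point. -/
def StandingAssumptions (X : Type*) [NormedAddCommGroup X] [NormedSpace ℝ X] : Prop :=
  Function.Surjective (⇑(NormedSpace.inclusionInDoubleDual ℝ X)) ∧
  LocUnifConvex X ∧ LocUnifConvex (X →L[ℝ] ℝ) ∧
  ∀ x : X, x ≠ 0 → DifferentiableAt ℝ (fun y : X => ‖y‖) x

variable {X : Type*}

open scoped Classical in
/-- The restriction `f_Ω` of `f` to `Ω` (equal to `+∞` off `Ω`). -/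
def restr (f : X → EReal) (Ω : Set X) : X → EReal := fun x => if x ∈ Ω then f x else ⊤

/-- The epigraph of an extended-real-valued function, as a subset of `X × ℝ`. -/
def epiSet (g : X → EReal) : Set (X × ℝ) := {p | g p.1 ≤ (p.2 : EReal)}

/-- The paper's addition on `ℝ̄ = ℝ ∪ {±∞}`, with the convention `∞ - ∞ = ∞`
(i.e. `⊤` dominates). -/
def pAdd (a b : EReal) : EReal := if a = ⊤ ∨ b = ⊤ then ⊤ else a + b

section NormedX
variable [NormedAddCommGroup X] [NormedSpace ℝ X]

/-- The `ε`-normal set to `S ⊆ X` at `xb`. -/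
def eNormal (ε : ℝ) (xb : X) (S : Set X) : Set (X →L[ℝ] ℝ) :=
  {xs | Filter.limsup (fun x => ((xs (x - xb) / ‖x - xb‖ : ℝ) : EReal))
      (nhdsWithin xb S) ≤ (ε : EReal)}

/-- The `ε`-normal set to `S ⊆ X × ℝ` at `zb`, where `X × ℝ` carries the norm
`‖(x, r)‖ = ‖x‖ + |r|` and the dual pairing is
`⟨(x*, r*), (x, r)⟩ = ⟨x*, x⟩ + r* r`. -/
def eNormalProd (ε : ℝ) (zb : X × ℝ) (S : Set (X × ℝ)) : Set ((X →L[ℝ] ℝ) × ℝ) :=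
  {zs | Filter.limsup
      (fun z => (((zs.1 (z.1 - zb.1) + zs.2 * (z.2 - zb.2)) /
        (‖z.1 - zb.1‖ + |z.2 - zb.2|) : ℝ) : EReal)) (nhdsWithin zb S) ≤ (ε : EReal)}

/-- The tangent cone to `Ω` at `xb`. -/
def tanCone (Ω : Set X) (xb : X) : Set X :=
  {v | ∃ (t : ℕ → ℝ) (w : ℕ → X), (∀ k, 0 < t k) ∧ Tendsto t atTop (nhds 0) ∧
    Tendsto w atTop (nhds v) ∧ ∀ k, xb + t k • w k ∈ Ω}

/-- The duality mapping `J(x) = {x* : ⟨x*, x⟩ = ‖x‖² = ‖x*‖²}`. -/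
def dualityMap (x : X) : Set (X →L[ℝ] ℝ) := {xs | xs x = ‖x‖ ^ 2 ∧ xs x = ‖xs‖ ^ 2}

/-- `J(A) = ⋃ x ∈ A, J(x)`. -/
def dualityMapSet (A : Set X) : Set (X →L[ℝ] ℝ) := ⋃ x ∈ A, dualityMap x

/-- The geometric `ε`-subdifferential `∂̂_ε g(xb)` (empty unless `g(xb)` is finite). -/
def geomSub (ε : ℝ) (g : X → EReal) (xb : X) : Set (X →L[ℝ] ℝ) :=
  {xs | ∃ r : ℝ, g xb = (r : EReal) ∧ (xs, (-1 : ℝ)) ∈ eNormalProd ε (xb, r) (epiSet g)}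

/-- The `ε`-regular subdifferential of `f` relative to `Ω` at `xb`:
`∂̂^ε_Ω f(xb) = ∂̂_ε f_Ω(xb) ∩ J(T(xb, Ω))`. -/
def relRegSub (ε : ℝ) (Ω : Set X) (f : X → EReal) (xb : X) : Set (X →L[ℝ] ℝ) :=
  geomSub ε (restr f Ω) xb ∩ dualityMapSet (tanCone Ω xb)

/-- Weak* convergence of a sequence of functionals. -/
def WeakStarTendsto (u : ℕ → X →L[ℝ] ℝ) (l : X →L[ℝ] ℝ) : Prop :=
  ∀ v : X, Tendsto (fun k => u k v) atTop (nhds (l v))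

/-- The limiting subdifferential of `f` relative to `Ω` at `xb`. -/
def relLimSub (Ω : Set X) (f : X → EReal) (xb : X) : Set (X →L[ℝ] ℝ) :=
  {xs | ∃ (ε : ℕ → ℝ) (x : ℕ → X) (u : ℕ → X →L[ℝ] ℝ),
    (∀ k, 0 < ε k) ∧ Antitone ε ∧ Tendsto ε atTop (nhds 0) ∧
    (∀ k, x k ∈ Ω) ∧ Tendsto x atTop (nhds xb) ∧
    Tendsto (fun k => f (x k)) atTop (nhds (f xb)) ∧
    (∀ k, u k ∈ relRegSub (ε k) Ω f (x k)) ∧ WeakStarTendsto u xs}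

/-- The (Mordukhovich) limiting subdifferential of `g` at `xb`. -/
def limSub (g : X → EReal) (xb : X) : Set (X →L[ℝ] ℝ) :=
  {xs | ∃ (ε : ℕ → ℝ) (x : ℕ → X) (u : ℕ → X →L[ℝ] ℝ),
    (∀ k, 0 < ε k) ∧ Antitone ε ∧ Tendsto ε atTop (nhds 0) ∧
    Tendsto x atTop (nhds xb) ∧ Tendsto (fun k => g (x k)) atTop (nhds (g xb)) ∧
    (∀ k, u k ∈ geomSub (ε k) g (x k)) ∧ WeakStarTendsto u xs}

/-- `f` is lower semicontinuous relative to `Ω` at `xb`. -/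
def LscRelAt (f : X → EReal) (Ω : Set X) (xb : X) : Prop :=
  f xb ≤ Filter.liminf f (nhdsWithin xb Ω)

/-- `f` is lower semicontinuous relative to `Ω` (at every point of `Ω ∩ dom f`). -/
def LscRelOn (f : X → EReal) (Ω : Set X) : Prop :=
  ∀ x ∈ Ω, f x ≠ ⊤ → LscRelAt f Ω x

/-- `f` is lower semicontinuous relative to `Ω` around `xb`. -/
def LscRelAround (f : X → EReal) (Ω : Set X) (xb : X) : Prop :=
  ∃ U ∈ 𝓝 xb, ∀ x ∈ U ∩ Ω, f x ≠ ⊤ → LscRelAt f Ω x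

/-- `f` is locally Lipschitz relative to `Ω` around `xb` with modulus `ℓ`. -/
def LocLipRel (f : X → EReal) (Ω : Set X) (xb : X) (ℓ : ℝ) : Prop :=
  ∃ U ∈ 𝓝 xb, (∀ x ∈ U ∩ Ω, ∃ r : ℝ, f x = (r : EReal)) ∧
    ∀ x ∈ U ∩ Ω, ∀ u ∈ U ∩ Ω, |(f x).toReal - (f u).toReal| ≤ ℓ * ‖x - u‖

/-- A set is locally closed around a point. -/
def LocallyClosedAt {E : Type*} [MetricSpace E] (S : Set E) (p : E) : Prop :=
  ∃ r : ℝ, 0 < r ∧ IsClosed (S ∩ Metric.closedBall p r)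

/-- `f` is (finite and) continuous relative to `Ω`. -/
def ContRelOn (f : X → EReal) (Ω : Set X) : Prop :=
  (∀ x ∈ Ω, ∃ r : ℝ, f x = (r : EReal)) ∧
  ∀ x ∈ Ω, Tendsto f (nhdsWithin x Ω) (nhds (f x))

/-- `f` is convex on the set `S`. -/
def ConvexOnSet (f : X → EReal) (S : Set X) : Prop :=
  ∀ x ∈ S, ∀ y ∈ S, ∀ t : ℝ, 0 ≤ t → t ≤ 1 →
    f (t • x + (1 - t) • y) ≤ (t : EReal) * f x + ((1 - t : ℝ) : EReal) * f y

/-- Monotonicity of a set-valued map from `X` into `X*`. -/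
def MonotoneSV (F : X → Set (X →L[ℝ] ℝ)) : Prop :=
  ∀ x u : X, ∀ xs us : X →L[ℝ] ℝ, xs ∈ F x → us ∈ F u → 0 ≤ (xs - us) (x - u)

end NormedX

end



lemma glue_lipschitz (g : ℝ → ℝ)
    (h : ∀ t ∈ Icc (0:ℝ) 1, ∃ V : Set ℝ, IsOpen V ∧ t ∈ V ∧ ∃ L : ℝ, 0 ≤ L ∧
      ∀ x ∈ V ∩ Icc (0:ℝ) 1, ∀ y ∈ V ∩ Icc (0:ℝ) 1, |g x - g y| ≤ L * |x - y|) :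
    ∃ L : ℝ, 0 ≤ L ∧ ∀ x ∈ Icc (0:ℝ) 1, ∀ y ∈ Icc (0:ℝ) 1, |g x - g y| ≤ L * |x - y| := by
  choose! V hVopen hmemV L hL0 hLip using h
  obtain ⟨s, hs, hcov⟩ := (isCompact_Icc (a := (0:ℝ)) (b := 1)).elim_nhds_subcover V
    (fun x hx => (hVopen x hx).mem_nhds (hmemV x hx))
  set L0 : ℝ := ∑ t ∈ s, L t with hL0def
  have hL0nn : 0 ≤ L0 := Finset.sum_nonneg (fun t ht => hL0 t (hs t ht))
  have hLle : ∀ t ∈ s, L t ≤ L0 :=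
    fun t ht => Finset.single_le_sum (fun u hu => hL0 u (hs u hu)) ht
  obtain ⟨δ, hδ, hball⟩ := lebesgue_number_lemma_of_metric isCompact_Icc
    (c := fun i : s => V i) (fun i => hVopen i (hs i i.2)) (by
      intro x hx
      obtain ⟨t, ht⟩ := Set.mem_iUnion₂.1 (hcov hx)
      exact Set.mem_iUnion.2 ⟨⟨t, ht.1⟩, ht.2⟩)
  -- short distance estimate
  have hshort : ∀ x ∈ Icc (0:ℝ) 1, ∀ y ∈ Icc (0:ℝ) 1, |x - y| < δ → |g x - g y| ≤ L0 * |x - y| := by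
    intro x hx y hy hxy
    obtain ⟨i, hi⟩ := hball x hx
    have hxV : x ∈ V i := hi (Metric.mem_ball_self hδ)
    have hyV : y ∈ V i := hi (by simpa [Metric.mem_ball, Real.dist_eq, abs_sub_comm] using hxy)
    calc |g x - g y| ≤ L i * |x - y| := hLip i (hs i i.2) x ⟨hxV, hx⟩ y ⟨hyV, hy⟩
      _ ≤ L0 * |x - y| := mul_le_mul_of_nonneg_right (hLle i i.2) (abs_nonneg _)
  refine ⟨L0, hL0nn, ?_⟩
  -- chaining
  have key : ∀ n : ℕ, ∀ x ∈ Icc (0:ℝ) 1, ∀ y ∈ Icc (0:ℝ) 1, x ≤ y → y - x ≤ n * (δ/2) →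
      |g x - g y| ≤ L0 * (y - x) := by
    intro n
    induction n with
    | zero =>
      intro x hx y hy hxy hle
      have : y = x := le_antisymm (by linarith [hle]) hxy
      simp [this]
    | succ n ih =>
      intro x hx y hy hxy hle
      by_cases hcase : y - x ≤ δ/2
      · have := hshort x hx y hy (by rw [abs_sub_lt_iff]; constructor <;> linarith)
        calc |g x - g y| ≤ L0 * |x - y| := this
          _ = L0 * (y - x) := by rw [abs_sub_comm, abs_of_nonneg (by linarith)]
      · push_neg at hcase
        push_cast at hle
        have hzy : x + δ/2 ≤ y := by linarith
        have hzI : x + δ/2 ∈ Icc (0:ℝ) 1 := ⟨by linarith [hx.1], le_trans hzy hy.2⟩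
        have h1 : |g x - g (x + δ/2)| ≤ L0 * (x + δ/2 - x) := by
          have := hshort x hx (x + δ/2) hzI (by rw [abs_sub_lt_iff]; constructor <;> linarith)
          calc |g x - g (x + δ/2)| ≤ L0 * |x - (x + δ/2)| := this
            _ = L0 * (x + δ/2 - x) := by rw [abs_sub_comm, abs_of_nonneg (by linarith)]
        have h2 : |g (x + δ/2) - g y| ≤ L0 * (y - (x + δ/2)) := by
          apply ih (x + δ/2) hzI y hy hzy
          linarith
        calc |g x - g y| ≤ |g x - g (x + δ/2)| + |g (x + δ/2) - g y| := abs_sub_le _ _ _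
          _ ≤ L0 * (x + δ/2 - x) + L0 * (y - (x + δ/2)) := add_le_add h1 h2
          _ = L0 * (y - x) := by ring
  intro x hx y hy
  rcases le_total x y with hxy | hxy
  · have hn := Nat.le_ceil ((y - x) / (δ/2))
    have := key ⌈(y - x) / (δ/2)⌉₊ x hx y hy hxy (by
      rw [div_le_iff₀ (by linarith)] at hn
      linarith [hn])
    calc |g x - g y| ≤ L0 * (y - x) := this
      _ = L0 * |x - y| := by rw [abs_sub_comm, abs_of_nonneg (by linarith)]
  · have hn := Nat.le_ceil ((x - y) / (δ/2))
    have := key ⌈(x - y) / (δ/2)⌉₊ y hy x hx hxy (by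
      rw [div_le_iff₀ (by linarith)] at hn
      linarith [hn])
    calc |g x - g y| = |g y - g x| := abs_sub_comm _ _
      _ ≤ L0 * (x - y) := this
      _ = L0 * |x - y| := by rw [abs_of_nonneg (by linarith)]


open MeasureTheory intervalIntegral NNReal

lemma slope_seq_tendsto {F : ℝ → ℝ} {d t : ℝ} (h : HasDerivAt F d t) :
    Tendsto (fun n : ℕ => (F (t + 1/((n:ℝ)+1)) - F t) * ((n:ℝ)+1)) atTop (𝓝 d) := by
  have hseq : Tendsto (fun n : ℕ => t + 1/((n:ℝ)+1)) atTop (𝓝[≠] t) := by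
    apply tendsto_nhdsWithin_of_tendsto_nhds_of_eventually_within
    · have := tendsto_one_div_add_atTop_nhds_zero_nat (𝕜 := ℝ)
      have h2 : Tendsto (fun n : ℕ => t + 1/((n:ℝ)+1)) atTop (𝓝 (t + 0)) := by
        apply Tendsto.const_add
        exact_mod_cast this
      simpa using h2
    · filter_upwards with n
      have : (0:ℝ) < 1/((n:ℝ)+1) := by positivity
      simp only [mem_compl_iff, mem_singleton_iff]
      intro hc
      nlinarith [hc]
  have := (hasDerivAt_iff_tendsto_slope.1 h).comp hseq
  apply this.congr
  intro n
  simp only [Function.comp_apply]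
  rw [slope_def_field]
  have hpos : ((n:ℝ)+1) ≠ 0 := by positivity
  have : t + 1/((n:ℝ)+1) - t = 1/((n:ℝ)+1) := by ring
  rw [this, one_div, div_inv_eq_mul]

set_option maxHeartbeats 1000000 in
lemma exists_deriv_ge_slope {G : ℝ → ℝ} {K : ℝ≥0} (hG : LipschitzWith K G) :
    ∃ t ∈ Ioo (0:ℝ) 1, DifferentiableAt ℝ G t ∧ G 1 - G 0 ≤ deriv G t := by
  have hcont : Continuous G := hG.continuous
  set φ : ℕ → ℝ → ℝ := fun n t => (G (t + 1/((n:ℝ)+1)) - G t) * ((n:ℝ)+1) with hφ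
  have hφbound : ∀ n t, |φ n t| ≤ (K:ℝ) := by
    intro n t
    have h1 : |G (t + 1/((n:ℝ)+1)) - G t| ≤ (K:ℝ) * (1/((n:ℝ)+1)) := by
      have := hG.dist_le_mul (t + 1/((n:ℝ)+1)) t
      rw [Real.dist_eq, Real.dist_eq] at this
      have e : t + 1/((n:ℝ)+1) - t = 1/((n:ℝ)+1) := by ring
      rw [e, abs_of_nonneg (by positivity : (0:ℝ) ≤ 1/((n:ℝ)+1))] at this
      exact this
    have hpos : (0:ℝ) < (n:ℝ)+1 := by positivity
    rw [hφ, abs_mul, abs_of_nonneg hpos.le]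
    calc |G (t + 1/((n:ℝ)+1)) - G t| * ((n:ℝ)+1)
        ≤ ((K:ℝ) * (1/((n:ℝ)+1))) * ((n:ℝ)+1) := by
          apply mul_le_mul_of_nonneg_right h1 hpos.le
      _ = (K:ℝ) := by field_simp
  have hdiff : ∀ᵐ t ∂(volume : Measure ℝ), DifferentiableAt ℝ G t := hG.ae_differentiableAt
  -- the measure
  set μ : Measure ℝ := volume.restrict (Ioc (0:ℝ) 1) with hμ
  have hlim : ∀ᵐ t ∂μ, Tendsto (fun n => φ n t) atTop (𝓝 (deriv G t)) := by
    apply ae_restrict_of_ae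
    filter_upwards [hdiff] with t ht
    exact slope_seq_tendsto ht.hasDerivAt
  have hmeas : ∀ n, AEStronglyMeasurable (φ n) μ := by
    intro n
    exact ((hcont.comp (by continuity)).sub hcont).mul continuous_const |>.aestronglyMeasurable
  have hboundae : ∀ n, ∀ᵐ t ∂μ, ‖φ n t‖ ≤ (K:ℝ) := by
    intro n; filter_upwards with t; simpa using hφbound n t
  have hbound_int : Integrable (fun _ : ℝ => (K:ℝ)) μ := integrable_const _
  have hderiv_meas : AEStronglyMeasurable (deriv G) μ :=
    (stronglyMeasurable_deriv G).aestronglyMeasurable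
  have hdct := MeasureTheory.tendsto_integral_of_dominated_convergence
    (fun _ => (K:ℝ)) hmeas hbound_int hboundae hlim
  -- integrability of deriv G
  have hderiv_bd : ∀ᵐ t ∂μ, ‖deriv G t‖ ≤ (K:ℝ) := by
    filter_upwards [hlim] with t ht
    have habs : Tendsto (fun n => |φ n t|) atTop (𝓝 |deriv G t|) := ht.abs
    have := le_of_tendsto habs (Filter.Eventually.of_forall (fun n => hφbound n t))
    simpa using this
  have hderiv_int : Integrable (deriv G) μ := Integrable.mono' hbound_int hderiv_meas hderiv_bd
  -- compute ∫ φ n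
  have hGint : ∀ u v : ℝ, IntervalIntegrable G volume u v := fun u v => hcont.intervalIntegrable u v
  have hF1 : HasDerivAt (fun u => ∫ x in (1:ℝ)..u, G x) (G 1) 1 :=
    (hcont.integral_hasStrictDerivAt 1 1).hasDerivAt
  have hF0 : HasDerivAt (fun u => ∫ x in (0:ℝ)..u, G x) (G 0) 0 :=
    (hcont.integral_hasStrictDerivAt 0 0).hasDerivAt
  have hIcomp : ∀ n : ℕ, ∫ t, φ n t ∂μ =
      ((∫ x in (1:ℝ)..(1+1/((n:ℝ)+1)), G x) - ∫ x in (0:ℝ)..(1/((n:ℝ)+1)), G x) * ((n:ℝ)+1) := by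
    intro n
    have h0 : (∫ t, φ n t ∂μ) = ∫ t in (0:ℝ)..1, φ n t := by
      rw [intervalIntegral.integral_of_le zero_le_one]
    rw [h0, hφ]
    have hint1 : IntervalIntegrable (fun t => G (t + 1/((n:ℝ)+1))) volume 0 1 :=
      (hcont.comp (continuous_id.add continuous_const)).intervalIntegrable 0 1
    rw [intervalIntegral.integral_mul_const]
    congr 1
    rw [intervalIntegral.integral_sub hint1 (hGint 0 1)]
    rw [intervalIntegral.integral_comp_add_right G (1/((n:ℝ)+1))]
    have c1 : (∫ x in (1/((n:ℝ)+1))..1, G x) + ∫ x in (1:ℝ)..(1+1/((n:ℝ)+1)), G x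
        = ∫ x in (1/((n:ℝ)+1))..(1+1/((n:ℝ)+1)), G x := by
      rw [intervalIntegral.integral_add_adjacent_intervals (hGint _ 1) (hGint 1 _)]
    have c2 : (∫ x in (0:ℝ)..(1/((n:ℝ)+1)), G x) + ∫ x in (1/((n:ℝ)+1))..1, G x
        = ∫ x in (0:ℝ)..1, G x := by
      rw [intervalIntegral.integral_add_adjacent_intervals (hGint 0 _) (hGint _ 1)]
    have e1 : (0:ℝ) + 1/((n:ℝ)+1) = 1/((n:ℝ)+1) := by ring
    rw [e1]
    linarith [c1, c2]
  -- limit of ∫ φ n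
  have hpsi : Tendsto (fun n : ℕ => ∫ t, φ n t ∂μ) atTop (𝓝 (G 1 - G 0)) := by
    have t1 := slope_seq_tendsto hF1
    have t0 := slope_seq_tendsto hF0
    have := t1.sub t0
    apply this.congr
    intro n
    rw [hIcomp n]
    rw [intervalIntegral.integral_same, intervalIntegral.integral_same]
    have e1 : (0:ℝ) + 1/((n:ℝ)+1) = 1/((n:ℝ)+1) := by ring
    rw [e1]
    ring
  have hint_eq : ∫ t, deriv G t ∂μ = G 1 - G 0 := tendsto_nhds_unique hdct hpsi
  -- conclusion by contradiction
  by_contra hcon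
  push_neg at hcon
  have hμuniv : μ Set.univ = 1 := by
    rw [hμ, Measure.restrict_apply_univ, Real.volume_Ioc]
    norm_num
  have hlt : ∀ᵐ t ∂μ, 0 < G 1 - G 0 - deriv G t := by
    have hne1 : ∀ᵐ t ∂(volume : Measure ℝ), t ≠ (1:ℝ) := by
      rw [ae_iff]
      simpa using measure_singleton (1:ℝ)
    filter_upwards [ae_restrict_mem measurableSet_Ioc, ae_restrict_of_ae hdiff,
      ae_restrict_of_ae hne1] with t htIoc htdiff htne
    have htIoo : t ∈ Ioo (0:ℝ) 1 := ⟨htIoc.1, lt_of_le_of_ne htIoc.2 htne⟩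
    have := hcon t htIoo htdiff
    linarith
  have hnonneg : 0 ≤ᵐ[μ] fun t => G 1 - G 0 - deriv G t := by
    filter_upwards [hlt] with t ht using ht.le
  have hint2 : Integrable (fun t => G 1 - G 0 - deriv G t) μ :=
    (integrable_const _).sub hderiv_int
  have hzero : ∫ t, (G 1 - G 0 - deriv G t) ∂μ = 0 := by
    rw [integral_sub (integrable_const _) hderiv_int, MeasureTheory.integral_const, measureReal_def, hμuniv, hint_eq]
    simp
  have heq0 := (MeasureTheory.integral_eq_zero_iff_of_nonneg_ae hnonneg hint2).1 hzero
  have hFalse : ∀ᵐ t ∂μ, False := by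
    filter_upwards [hlt, heq0] with t h1 h2
    rw [Pi.zero_apply] at h2
    exact absurd h2 (ne_of_gt h1)
  rw [ae_iff] at hFalse
  simp only [not_false_eq_true, setOf_true] at hFalse
  rw [hμuniv] at hFalse
  exact one_ne_zero hFalse


set_option maxHeartbeats 2000000 in
set_option synthInstance.maxHeartbeats 200000 in
/-- mean value inequality for relatively Lipschitzian functions. -/
theorem mean_value_inequality
    {X : Type*} [NormedAddCommGroup X] [NormedSpace ℝ X] [CompleteSpace X]
    (hX : StandingAssumptions X)
    (a b : X) (hab : a ≠ b)
    (f : X → EReal)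
    (hfin : ∀ x ∈ segment ℝ a b, ∃ r : ℝ, f x = (r : EReal))
    (hlip : ∀ x ∈ segment ℝ a b, ∃ ℓ : ℝ, 0 ≤ ℓ ∧ LocLipRel f (segment ℝ a b) x ℓ) :
    ∃ c ∈ segment ℝ a b, c ≠ b ∧
      ∃ xs ∈ relLimSub (segment ℝ a b) f c,
        (f b).toReal - (f a).toReal ≤ xs (b - a) := by
  classical
  set v : X := b - a with hv
  have hvne : v ≠ 0 := sub_ne_zero.2 hab.symm
  have hvpos : (0:ℝ) < ‖v‖ := norm_pos_iff.2 hvne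
  set Ω : Set X := segment ℝ a b with hΩ
  have hmem : ∀ s : ℝ, s ∈ Icc (0:ℝ) 1 → a + s • v ∈ Ω := by
    intro s hs
    rw [hΩ, segment_eq_image']
    exact ⟨s, hs, rfl⟩
  have hmem' : ∀ x ∈ Ω, ∃ s ∈ Icc (0:ℝ) 1, a + s • v = x := by
    intro x hx
    rw [hΩ, segment_eq_image'] at hx
    obtain ⟨s, hs, hsx⟩ := hx
    exact ⟨s, hs, hsx⟩
  set g : ℝ → ℝ := fun s => (f (a + s • v)).toReal with hgdef
  have hg : ∀ s ∈ Icc (0:ℝ) 1, f (a + s • v) = ((g s : ℝ) : EReal) := by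
    intro s hs
    obtain ⟨r, hr⟩ := hfin _ (hmem s hs)
    rw [hgdef]; simp only [hr, EReal.toReal_coe]
  -- g is Lipschitz on [0,1]
  have hglip : ∃ L : ℝ, 0 ≤ L ∧ ∀ x ∈ Icc (0:ℝ) 1, ∀ y ∈ Icc (0:ℝ) 1,
      |g x - g y| ≤ L * |x - y| := by
    apply glue_lipschitz
    intro t ht
    obtain ⟨ℓ, hℓ0, U, hU, hfinU, hlipU⟩ := hlip _ (hmem t ht)
    obtain ⟨O, hOU, hOopen, hxO⟩ := mem_nhds_iff.1 hU
    refine ⟨(fun s : ℝ => a + s • v) ⁻¹' O, hOopen.preimage (by continuity), hxO, ℓ * ‖v‖,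
      mul_nonneg hℓ0 hvpos.le, ?_⟩
    intro x hx y hy
    have h1 := hlipU (a + x • v) ⟨hOU hx.1, hmem x hx.2⟩ (a + y • v) ⟨hOU hy.1, hmem y hy.2⟩
    calc |g x - g y| ≤ ℓ * ‖(a + x • v) - (a + y • v)‖ := h1
      _ = ℓ * ‖v‖ * |x - y| := by
          rw [add_sub_add_left_eq_sub, ← sub_smul, norm_smul, Real.norm_eq_abs]; ring
  obtain ⟨L, hL0, hLg⟩ := hglip
  have hglipOn : LipschitzOnWith L.toNNReal g (Icc (0:ℝ) 1) := by
    apply LipschitzOnWith.of_dist_le_mul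
    intro x hx y hy
    rw [Real.dist_eq, Real.dist_eq, Real.coe_toNNReal L hL0]
    exact hLg x hx y hy
  obtain ⟨G, hGlip, hGeq⟩ := hglipOn.extend_real
  obtain ⟨tb, htb, hGdiff, hGslope⟩ := exists_deriv_ge_slope hGlip
  set m : ℝ := deriv G tb with hm
  have htbI : tb ∈ Icc (0:ℝ) 1 := Ioo_subset_Icc_self htb
  -- endpoints
  have hb' : a + (1:ℝ) • v = b := by rw [one_smul, hv]; abel
  have ha' : a + (0:ℝ) • v = a := by rw [zero_smul, add_zero]
  have hΔ : (f b).toReal - (f a).toReal ≤ m := by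
    have h1 : g 1 = (f b).toReal := by rw [hgdef]; simp only [hb']
    have h0 : g 0 = (f a).toReal := by rw [hgdef]; simp only [ha']
    have e1 : G 1 = g 1 := (hGeq (right_mem_Icc.2 zero_le_one)).symm
    have e0 : G 0 = g 0 := (hGeq (left_mem_Icc.2 zero_le_one)).symm
    rw [← h1, ← h0, ← e1, ← e0]
    exact hGslope
  -- the functional
  obtain ⟨j, hjnorm, hjv⟩ := exists_dual_vector ℝ v (norm_ne_zero_iff.2 hvne)
  replace hjv : j v = ‖v‖ := hjv
  set xs : X →L[ℝ] ℝ := (m / ‖v‖) • j with hxs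
  have hxsv : xs v = m := by
    rw [hxs]
    simp only [ContinuousLinearMap.smul_apply, smul_eq_mul, hjv]
    field_simp
  set c : X := a + tb • v with hc
  have hcΩ : c ∈ Ω := hmem tb htbI
  have hcb : c ≠ b := by
    intro h
    rw [hc, ← hb'] at h
    have h2 : (tb - 1) • v = 0 := by
      have := sub_eq_zero.2 h
      rw [add_sub_add_left_eq_sub, ← sub_smul] at this
      exact this
    rcases smul_eq_zero.1 h2 with h3 | h3
    · have : tb = 1 := by linarith [sub_eq_zero.1 h3]
      exact absurd this (ne_of_lt htb.2)
    · exact hvne h3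
  have hfc : f c = ((g tb : ℝ) : EReal) := hg tb htbI
  -- geometric subdifferential membership for every ε > 0
  have hgeom : ∀ ε : ℝ, 0 < ε → xs ∈ geomSub ε (restr f Ω) c := by
    intro ε hε
    refine ⟨g tb, by simp [restr, hcΩ, hfc], ?_⟩
    simp only [eNormalProd, Set.mem_setOf_eq]
    have hder : HasDerivAt G m tb := hGdiff.hasDerivAt
    have hlittle := (hasDerivAt_iff_isLittleO.1 hder).def (show (0:ℝ) < ε * ‖v‖ by positivity)
    rw [Metric.eventually_nhds_iff] at hlittle
    obtain ⟨δ, hδ, hbd⟩ := hlittle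
    have hballmem : Metric.ball ((c, g tb) : X × ℝ) (δ * ‖v‖) ∈
        nhdsWithin ((c, g tb) : X × ℝ) (epiSet (restr f Ω)) :=
      nhdsWithin_le_nhds (Metric.ball_mem_nhds _ (by positivity))
    have hbound : ∀ᶠ z in nhdsWithin ((c, g tb) : X × ℝ) (epiSet (restr f Ω)),
        (((xs (z.1 - c) + (-1:ℝ) * (z.2 - g tb)) /
          (‖z.1 - c‖ + |z.2 - g tb|) : ℝ) : EReal) ≤ (ε : EReal) := by
      filter_upwards [hballmem, self_mem_nhdsWithin] with z hzball hzepi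
      rw [EReal.coe_le_coe_iff]
      -- z.1 lies on the segment
      have hz1Ω : z.1 ∈ Ω := by
        by_contra hno
        have htop : restr f Ω z.1 = ⊤ := by simp [restr, hno]
        have hle : restr f Ω z.1 ≤ ((z.2 : ℝ) : EReal) := hzepi
        rw [htop] at hle
        exact EReal.coe_ne_top _ (top_le_iff.1 hle)
      obtain ⟨s, hsI, hsz⟩ := hmem' z.1 hz1Ω
      have hfz : f z.1 ≤ ((z.2 : ℝ) : EReal) := by
        have hle : restr f Ω z.1 ≤ ((z.2 : ℝ) : EReal) := hzepi
        rwa [show restr f Ω z.1 = f z.1 by simp [restr, hz1Ω]] at hle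
      have hgs : g s ≤ z.2 := by
        rw [← hsz, hg s hsI] at hfz
        exact_mod_cast hfz
      have hz1c : z.1 - c = (s - tb) • v := by
        rw [← hsz, hc, add_sub_add_left_eq_sub, ← sub_smul]
      have hnz : ‖z.1 - c‖ = |s - tb| * ‖v‖ := by
        rw [hz1c, norm_smul, Real.norm_eq_abs]
      -- distance control
      have hdist1 : dist z.1 c < δ * ‖v‖ := by
        have h1 : dist z ((c, g tb) : X × ℝ) < δ * ‖v‖ := by
          simpa [Metric.mem_ball] using hzball
        calc dist z.1 c ≤ dist z ((c, g tb) : X × ℝ) := by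
              rw [Prod.dist_eq]; exact le_max_left _ _
          _ < δ * ‖v‖ := h1
      have hstb : |s - tb| < δ := by
        rw [dist_eq_norm, hnz] at hdist1
        exact lt_of_mul_lt_mul_right hdist1 hvpos.le
      -- little-o bound
      have hlo : ‖G s - G tb - (s - tb) • m‖ ≤ ε * ‖v‖ * ‖s - tb‖ := by
        apply hbd
        rw [Real.dist_eq]
        exact hstb
      have hlo' : |G s - G tb - (s - tb) * m| ≤ ε * ‖v‖ * |s - tb| := by
        simpa [Real.norm_eq_abs, smul_eq_mul] using hlo
      -- numerator value
      have hxsz : xs (z.1 - c) = m * (s - tb) := by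
        rw [hz1c, hxs]
        simp only [ContinuousLinearMap.smul_apply, ContinuousLinearMap.map_smul, smul_eq_mul, hjv]
        field_simp
      have hGg : G s = g s := (hGeq hsI).symm
      have hGgtb : G tb = g tb := (hGeq htbI).symm
      -- numerator bound
      have hnum : xs (z.1 - c) + (-1:ℝ) * (z.2 - g tb) ≤ ε * (‖z.1 - c‖ + |z.2 - g tb|) := by
        have h2 : xs (z.1 - c) + (-1:ℝ) * (z.2 - g tb) ≤ m * (s - tb) - (g s - g tb) := by
          rw [hxsz]
          have : g s - g tb ≤ z.2 - g tb := by linarith [hgs]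
          linarith
        have h3 : m * (s - tb) - (g s - g tb) ≤ ε * ‖v‖ * |s - tb| := by
          have h4 : m * (s - tb) - (g s - g tb) = -(G s - G tb - (s - tb) * m) := by
            rw [hGg, hGgtb]; ring
          rw [h4]
          calc -(G s - G tb - (s - tb) * m) ≤ |G s - G tb - (s - tb) * m| := neg_le_abs _
            _ ≤ ε * ‖v‖ * |s - tb| := hlo'
        have h5 : ε * ‖v‖ * |s - tb| = ε * ‖z.1 - c‖ := by rw [hnz]; ring
        have h6 : ε * ‖z.1 - c‖ ≤ ε * (‖z.1 - c‖ + |z.2 - g tb|) := by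
          apply mul_le_mul_of_nonneg_left _ hε.le
          simp [abs_nonneg]
        linarith
      -- conclude
      rcases eq_or_lt_of_le (by positivity : (0:ℝ) ≤ ‖z.1 - c‖ + |z.2 - g tb|) with hden | hden
      · rw [← hden, div_zero]
        exact hε.le
      · rw [div_le_iff₀ hden]
        linarith [hnum]
    exact Filter.limsup_le_of_le (h := hbound)
  -- duality map membership
  have hdual : xs ∈ dualityMapSet (tanCone Ω c) := by
    set lam : ℝ := m / ‖v‖^2 with hlam
    set w : X := lam • v with hw
    have hρpos : (0:ℝ) < min tb (1-tb) / (1 + |lam|) := by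
      apply div_pos (lt_min htb.1 (by linarith [htb.2])) (by positivity)
    set ρ : ℝ := min tb (1-tb) / (1 + |lam|) with hρ
    have hρlam : ρ * |lam| ≤ min tb (1-tb) := by
      rw [hρ, div_mul_eq_mul_div, div_le_iff₀ (by positivity : (0:ℝ) < 1 + |lam|)]
      have h1 : (0:ℝ) ≤ min tb (1-tb) := le_min htb.1.le (by linarith [htb.2])
      nlinarith [abs_nonneg lam]
    have hwtan : w ∈ tanCone Ω c := by
      refine ⟨fun k => ρ * (1/((k:ℝ)+1)), fun _ => w, fun k => by positivity, ?_,
        tendsto_const_nhds, ?_⟩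
      · have := tendsto_one_div_add_atTop_nhds_zero_nat (𝕜 := ℝ)
        have h2 := this.const_mul ρ
        simpa using h2
      · intro k
        have htk : (0:ℝ) < ρ * (1/((k:ℝ)+1)) := by positivity
        have htkρ : ρ * (1/((k:ℝ)+1)) ≤ ρ := by
          have h3 : 1/((k:ℝ)+1) ≤ 1 := by
            rw [div_le_one (by positivity)]; linarith [Nat.cast_nonneg (α := ℝ) k]
          nlinarith
        have habs : |ρ * (1/((k:ℝ)+1)) * lam| ≤ min tb (1-tb) := by
          rw [abs_mul]
          calc |ρ * (1/((k:ℝ)+1))| * |lam| ≤ ρ * |lam| := by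
                apply mul_le_mul_of_nonneg_right _ (abs_nonneg lam)
                rw [abs_of_pos htk]; exact htkρ
            _ ≤ min tb (1-tb) := hρlam
        have heq : c + (ρ * (1/((k:ℝ)+1))) • w = a + (tb + ρ * (1/((k:ℝ)+1)) * lam) • v := by
          rw [hc, hw, smul_smul, add_smul, add_assoc]
        rw [heq]
        apply hmem
        constructor
        · have := abs_le.1 habs
          have h4 : min tb (1-tb) ≤ tb := min_le_left _ _
          linarith [this.1]
        · have := abs_le.1 habs
          have h4 : min tb (1-tb) ≤ 1 - tb := min_le_right _ _
          linarith [this.2]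
    refine Set.mem_biUnion hwtan ?_
    · have hwnorm : ‖w‖ = |m| / ‖v‖ := by
        rw [hw, norm_smul, Real.norm_eq_abs, hlam, abs_div, abs_of_pos (by positivity : (0:ℝ) < ‖v‖^2)]
        field_simp
      have hxsnorm : ‖xs‖ = |m| / ‖v‖ := by
        have hns := norm_smul (m / ‖v‖) j
        rw [hxs, hns, Real.norm_eq_abs, hjnorm, mul_one, abs_div, abs_of_pos hvpos]
      have hxsw : xs w = m^2 / ‖v‖^2 := by
        rw [hw, hxs]
        simp only [ContinuousLinearMap.smul_apply, ContinuousLinearMap.map_smul, smul_eq_mul, hjv, hlam]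
        field_simp
      constructor
      · rw [hxsw, hwnorm, div_pow, sq_abs]
      · rw [hxsw, hxsnorm, div_pow, sq_abs]
  refine ⟨c, hcΩ, hcb, xs, ?_, by rw [hxsv]; exact hΔ⟩
  refine ⟨fun k => 1/((k:ℝ)+1), fun _ => c, fun _ => xs, fun k => by positivity, ?_, ?_,
    fun k => hcΩ, tendsto_const_nhds, tendsto_const_nhds, ?_, fun w => tendsto_const_nhds⟩
  · intro i k hik
    apply one_div_le_one_div_of_le (by positivity)
    have : (i:ℝ) ≤ (k:ℝ) := Nat.cast_le.2 hik
    linarith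
  · exact_mod_cast tendsto_one_div_add_atTop_nhds_zero_nat (𝕜 := ℝ)
  · intro k
    exact ⟨hgeom _ (by positivity), hdual⟩
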